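/- For any μ₁, μ₂ ∈ ℝ, σ > 0, and α > 1, the Rényi divergence of order α between the real Gaussian measures 𝒩(μ₁, σ²) and 𝒩(μ₂, σ²) equals α·(μ₁ − μ₂)²/(2σ²). -/

import Mathlib

open MeasureTheory Classical
open scoped NNReal ENNReal Real

/-- The Rényi divergence of order `α` between measures `P` and `Q`:
`D_α(P‖Q) = (1/(α−1)) · log ∫ (dP/dQ)^α dQ`, and `⊤` if `P` is not absolutely
continuous with respect to `Q`. -/
noncomputable def renyiDiv {Ω : Type*} [MeasurableSpace Ω] (α : ℝ) (P Q : Measure Ω) : EReal :=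
  if P ≪ Q then ((α - 1)⁻¹ : ℝ) * ENNReal.log (∫⁻ x, P.rnDeriv Q x ^ α ∂Q) else ⊤

open ProbabilityTheory Real in
private lemma gaussian_pointwise_key (μ₁ μ₂ σ α : ℝ) (hσ : 0 < σ) (x : ℝ) :
    gaussianPDFReal μ₂ ((σ ^ 2).toNNReal) x *
      (gaussianPDFReal μ₁ ((σ ^ 2).toNNReal) x / gaussianPDFReal μ₂ ((σ ^ 2).toNNReal) x) ^ α =
    rexp (α * (α - 1) * (μ₁ - μ₂) ^ 2 / (2 * σ ^ 2)) *
      gaussianPDFReal (α * μ₁ + (1 - α) * μ₂) ((σ ^ 2).toNNReal) x := by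
  have hv : ((((σ ^ 2).toNNReal) : ℝ≥0) : ℝ) = σ ^ 2 := Real.coe_toNNReal _ (sq_nonneg σ)
  have hσ2 : (0:ℝ) < σ ^ 2 := by positivity
  have hc : (0:ℝ) < (√(2 * π * σ ^ 2))⁻¹ := by
    have : (0:ℝ) < 2 * π * σ ^ 2 := by positivity
    positivity
  simp only [gaussianPDFReal, hv]
  set c := (√(2 * π * σ ^ 2))⁻¹ with hcdef
  rw [mul_div_mul_left _ _ hc.ne', ← Real.exp_sub,
    Real.rpow_def_of_pos (Real.exp_pos _), Real.log_exp, mul_assoc, ← Real.exp_add]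
  rw [show -(x - μ₂) ^ 2 / (2 * σ ^ 2) +
        (-(x - μ₁) ^ 2 / (2 * σ ^ 2) - -(x - μ₂) ^ 2 / (2 * σ ^ 2)) * α
      = α * (α - 1) * (μ₁ - μ₂) ^ 2 / (2 * σ ^ 2)
        + -(x - (α * μ₁ + (1 - α) * μ₂)) ^ 2 / (2 * σ ^ 2) from by field_simp; ring,
    Real.exp_add]
  ring

open ProbabilityTheory Real in
theorem renyiDiv_gaussianReal
    (μ₁ μ₂ σ : ℝ) (hσ : 0 < σ) (α : ℝ) (hα : 1 < α) :
    renyiDiv α (ProbabilityTheory.gaussianReal μ₁ ((σ ^ 2).toNNReal))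
        (ProbabilityTheory.gaussianReal μ₂ ((σ ^ 2).toNNReal))
      = ((α * (μ₁ - μ₂) ^ 2 / (2 * σ ^ 2) : ℝ) : EReal) := by
  set v : ℝ≥0 := (σ ^ 2).toNNReal with hvdef
  have hσ2 : (0:ℝ) < σ ^ 2 := by positivity
  have hv : v ≠ 0 := by
    simp only [hvdef, ne_eq, Real.toNNReal_eq_zero, not_le]
    exact hσ2
  set P := gaussianReal μ₁ v with hP
  set Q := gaussianReal μ₂ v with hQ
  have hPQ : P ≪ Q :=
    (gaussianReal_absolutelyContinuous μ₁ hv).trans (gaussianReal_absolutelyContinuous' μ₂ hv)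
  rw [renyiDiv, if_pos hPQ]
  set p : ℝ → ℝ≥0∞ := gaussianPDF μ₁ v with hpdef
  set q : ℝ → ℝ≥0∞ := gaussianPDF μ₂ v with hqdef
  have hpm : Measurable p := measurable_gaussianPDF μ₁ v
  have hqm : Measurable q := measurable_gaussianPDF μ₂ v
  have hPwd : P = Q.withDensity (fun x => p x / q x) := by
    rw [hQ, gaussianReal_of_var_ne_zero _ hv, ← hqdef, show (fun x => p x / q x) = p / q from rfl,
      ← withDensity_mul _ hqm (hpm.div hqm)]
    rw [hP, gaussianReal_of_var_ne_zero _ hv]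
    congr 1
    ext x
    exact (ENNReal.mul_div_cancel (gaussianPDF_pos _ hv x).ne' ENNReal.ofReal_ne_top).symm
  have hrn : P.rnDeriv Q =ᵐ[Q] fun x => p x / q x := by
    rw [hPwd]; exact Measure.rnDeriv_withDensity Q (hpm.div hqm)
  have hstep1 : ∫⁻ x, P.rnDeriv Q x ^ α ∂Q = ∫⁻ x, (p x / q x) ^ α ∂Q :=
    lintegral_congr_ae (hrn.mono fun x hx => by simp only [hx])
  have hstep2 : ∫⁻ x, (p x / q x) ^ α ∂Q
      = ∫⁻ x, q x * (p x / q x) ^ α := by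
    rw [hQ, gaussianReal_of_var_ne_zero _ hv, ← hqdef,
      lintegral_withDensity_eq_lintegral_mul _ (g := fun x => (p x / q x) ^ α) hqm ((hpm.div hqm).pow_const α)]
    rfl
  have hpt : ∀ x, q x * (p x / q x) ^ α
      = ENNReal.ofReal (rexp (α * (α - 1) * (μ₁ - μ₂) ^ 2 / (2 * σ ^ 2))
          * gaussianPDFReal (α * μ₁ + (1 - α) * μ₂) v x) := by
    intro x
    have hqpos := gaussianPDFReal_pos μ₂ v x hv
    have hppos := gaussianPDFReal_pos μ₁ v x hv
    rw [hpdef, hqdef, gaussianPDF, gaussianPDF, ← ENNReal.ofReal_div_of_pos hqpos,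
      ENNReal.ofReal_rpow_of_pos (div_pos hppos hqpos),
      ← ENNReal.ofReal_mul hqpos.le]
    exact congrArg _ (gaussian_pointwise_key μ₁ μ₂ σ α hσ x)
  have hstep3 : ∫⁻ x, q x * (p x / q x) ^ α
      = ENNReal.ofReal (rexp (α * (α - 1) * (μ₁ - μ₂) ^ 2 / (2 * σ ^ 2))) := by
    simp_rw [hpt]
    simp_rw [ENNReal.ofReal_mul (Real.exp_pos (α * (α - 1) * (μ₁ - μ₂) ^ 2 / (2 * σ ^ 2))).le]
    rw [lintegral_const_mul _ (measurable_gaussianPDFReal _ _).ennreal_ofReal,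
      lintegral_gaussianPDFReal_eq_one _ hv, mul_one]
  rw [hstep1, hstep2, hstep3, ENNReal.log_ofReal_of_pos (Real.exp_pos _), Real.log_exp,
    ← EReal.coe_mul]
  congr 1
  have hα1 : α - 1 ≠ 0 := sub_ne_zero.mpr hα.ne'
  field_simp
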